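/- Let (S, μ) be a measure space with μ a finite measure, let 0 < δ ≤ ε ≤ 1/e², let f : S → ℝ≥0 be a probability density with respect to μ (i.e., ∫ f dμ = 1), and let g : S → ℝ≥0 satisfy |f(s) - g(s)| ≤ ε and g(s) ≥ δ for all s. Then |∫ f(s)(log f(s) - log g(s)) dμ(s)| ≤ 2√ε + μ(S)·√ε·log(1/ε + 1/δ). -/

import Mathlib

open MeasureTheory

/-- Pointwise bound: if `0 ≤ x`, `δ ≤ y`, `|x - y| ≤ t²` with `0 < t ≤ 1/2`,
`2 ≤ L` and `log (1/δ) ≤ L`, then `|x (log x - log y)| ≤ 2 t x + t L`. -/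
lemma kl_pt (t δ L : ℝ) (hδ0 : 0 < δ) (ht0 : 0 < t) (ht2 : t ≤ 1/2)
    (hL2 : 2 ≤ L) (hLδ : Real.log (1/δ) ≤ L)
    (x y : ℝ) (hx : 0 ≤ x) (hy : δ ≤ y) (hxy : |x - y| ≤ t^2) :
    |x * (Real.log x - Real.log y)| ≤ 2*t*x + t*L := by
  have hy0 : 0 < y := hδ0.trans_le hy
  have hL0 : 0 < L := by linarith
  rcases hx.eq_or_lt with h0 | hx0
  · rw [← h0]
    simp
    positivity
  · have habs := abs_le.mp hxy
    rw [abs_le]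
    have htL : t^2 ≤ t*L := by nlinarith
    constructor
    · -- lower bound: x (log y - log x) = x log (y/x) ≤ y - x ≤ t² ≤ t L
      have h1 : Real.log (y/x) ≤ y/x - 1 := Real.log_le_sub_one_of_pos (by positivity)
      have h2 : x * Real.log (y/x) ≤ y - x := by
        have := mul_le_mul_of_nonneg_left h1 hx
        calc x * Real.log (y/x) ≤ x * (y/x - 1) := this
        _ = y - x := by field_simp
      have h3 : Real.log (y/x) = Real.log y - Real.log x := Real.log_div hy0.ne' hx0.ne'
      rw [h3] at h2
      nlinarith
    · -- upper bound
      rcases le_or_gt t x with hcase | hcase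
      · -- x ≥ t : then y ≥ (1-t) x, so log(x/y) ≤ x/y - 1 ≤ t/(1-t) ≤ 2t
        have hyx : (1 - t) * x ≤ y := by nlinarith
        have hy0' : (0:ℝ) < (1-t)*x := by nlinarith
        have hxy2 : x / y ≤ 1 / (1 - t) := by
          rw [div_le_div_iff₀ hy0 (by linarith : (0:ℝ) < 1 - t)]
          nlinarith
        have h1 : Real.log (x/y) ≤ x/y - 1 := Real.log_le_sub_one_of_pos (by positivity)
        have h2 : Real.log (x/y) ≤ 2*t := by
          have : (1:ℝ)/(1-t) - 1 ≤ 2*t := by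
            rw [div_sub' (by linarith : (1:ℝ) - t ≠ 0)]
            rw [div_le_iff₀ (by linarith : (0:ℝ) < 1 - t)]
            nlinarith
          linarith
        have h3 : Real.log (x/y) = Real.log x - Real.log y := Real.log_div hx0.ne' hy0.ne'
        rw [h3] at h2
        nlinarith
      · -- x < t : log(x/y) ≤ log(1/δ) ≤ L, so x log(x/y) ≤ x L ≤ t L
        have hxyδ : x / y ≤ 1 / δ := by
          rw [div_le_div_iff₀ hy0 hδ0]
          nlinarith
        have h1 : Real.log (x/y) ≤ Real.log (1/δ) :=
          Real.log_le_log (by positivity) hxyδ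
        have h3 : Real.log (x/y) = Real.log x - Real.log y := Real.log_div hx0.ne' hy0.ne'
        rw [h3] at h1
        nlinarith

/-- If `f` is a probability density w.r.t. a finite measure `μ`, and `g ≥ δ` satisfies
`|f - g| ≤ ε` pointwise with `0 < δ ≤ ε ≤ 1/e²`, then
`|∫ f (log f - log g) dμ| ≤ 2√ε + μ(S) √ε log(1/ε + 1/δ)`. -/
theorem kl_error_estimate {S : Type*} [MeasurableSpace S] (μ : Measure S) [IsFiniteMeasure μ]
    (ε δ : ℝ) (hδ : 0 < δ) (hδε : δ ≤ ε) (hε : ε ≤ 1 / Real.exp 2)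
    (f g : S → ℝ) (hf0 : ∀ s, 0 ≤ f s)
    (hfdens : ∫ s, f s ∂μ = 1)
    (hfg : ∀ s, |f s - g s| ≤ ε) (hgδ : ∀ s, δ ≤ g s)
    (hint : Integrable (fun s => f s * (Real.log (f s) - Real.log (g s))) μ) :
    |∫ s, f s * (Real.log (f s) - Real.log (g s)) ∂μ| ≤
      2 * Real.sqrt ε + (μ Set.univ).toReal * Real.sqrt ε * Real.log (1 / ε + 1 / δ) := by
  have hε0 : 0 < ε := hδ.trans_le hδε
  set t := Real.sqrt ε with htdef
  have ht0 : 0 < t := Real.sqrt_pos.mpr hε0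
  have ht2 : t^2 = ε := Real.sq_sqrt hε0.le
  have hexp1 : (2:ℝ) ≤ Real.exp 1 := by
    have := Real.add_one_le_exp (1:ℝ); linarith
  have hexp2 : (4:ℝ) ≤ Real.exp 2 := by
    have h : Real.exp 2 = Real.exp 1 * Real.exp 1 := by
      rw [← Real.exp_add]; norm_num
    nlinarith
  have hε4 : ε ≤ 1/4 := by
    calc ε ≤ 1 / Real.exp 2 := hε
    _ ≤ 1/4 := by
      apply div_le_div_of_nonneg_left (by norm_num) (by norm_num) hexp2
  have hthalf : t ≤ 1/2 := by
    have h := Real.sqrt_le_sqrt hε4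
    rwa [show (1/4:ℝ) = (1/2)^2 by norm_num, Real.sqrt_sq (by norm_num : (0:ℝ) ≤ 1/2)] at h
  set L := Real.log (1/ε + 1/δ) with hLdef
  have hδ1 : (0:ℝ) < 1/δ := by positivity
  have hε1 : (0:ℝ) < 1/ε := by positivity
  have hL2 : 2 ≤ L := by
    rw [hLdef, Real.le_log_iff_exp_le (by positivity)]
    have : Real.exp 2 ≤ 1/ε := by
      rw [le_div_iff₀ hε0]
      calc Real.exp 2 * ε ≤ Real.exp 2 * (1 / Real.exp 2) :=
        mul_le_mul_of_nonneg_left hε (Real.exp_pos 2).le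
      _ = 1 := by field_simp
    linarith
  have hLδ : Real.log (1/δ) ≤ L := Real.log_le_log hδ1 (by linarith)
  have hfi : Integrable f μ := by
    by_contra h
    rw [integral_undef h] at hfdens
    norm_num at hfdens
  have hBint : Integrable (fun s => 2*t*f s + t*L) μ :=
    (hfi.const_mul (2*t)).add (integrable_const (t*L))
  have hpt : ∀ s, |f s * (Real.log (f s) - Real.log (g s))| ≤ 2*t*f s + t*L := fun s =>
    kl_pt t δ L hδ ht0 hthalf hL2 hLδ (f s) (g s) (hf0 s) (hgδ s) (by rw [ht2]; exact hfg s)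
  calc |∫ s, f s * (Real.log (f s) - Real.log (g s)) ∂μ|
      ≤ ∫ s, |f s * (Real.log (f s) - Real.log (g s))| ∂μ := by
        simpa only [Real.norm_eq_abs] using
          norm_integral_le_integral_norm (μ := μ)
            (fun s => f s * (Real.log (f s) - Real.log (g s)))
    _ ≤ ∫ s, (2*t*f s + t*L) ∂μ := integral_mono hint.abs hBint hpt
    _ = 2*t*(∫ s, f s ∂μ) + (μ Set.univ).toReal * (t*L) := by
        rw [integral_add (hfi.const_mul (2*t)) (integrable_const (t*L)),
          integral_const_mul, integral_const, smul_eq_mul, measureReal_def]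
    _ = 2 * t + (μ Set.univ).toReal * t * L := by rw [hfdens]; ring
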